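/- Under the threshold regression model (Y = r(X) + ε, X ⊥ ε, E ε = 0, E ε² = σ² < ∞, E X² < ∞, E r(X)² < ∞, X with continuous cdf), let u₀ be the infimum of all u in the support of X with P(r(X) = α + βX | X > u) = 1 for some α,β, and assume u₀ is finite and that r is not almost surely linear on the whole support (i.e., for all α,β, P(r(X) = α + βX) < 1). Then for every u < u₀ with P(X ≥ u) > 0 and Var(X | X ≥ u) > 0, the loss ℓ(u) = min_{α,β} E[(Y - α - βX)² | X ≥ u] satisfies ℓ(u) > σ². -/

import Mathlib

open MeasureTheory ProbabilityTheory

/-- Conditional mean of `W` given the event `{X ≥ u}`. -/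
noncomputable def condMean {Ω : Type*} [MeasurableSpace Ω] (μ : Measure Ω)
    (X : Ω → ℝ) (u : ℝ) (W : Ω → ℝ) : ℝ :=
  (∫ ω in {ω | u ≤ X ω}, W ω ∂μ) / (μ {ω | u ≤ X ω}).toReal

/-- `ℓ(u)`: the minimal conditional mean squared error of a linear predictor of
`Y` from `X` given `X ≥ u`. -/
noncomputable def linLoss {Ω : Type*} [MeasurableSpace Ω] (μ : Measure Ω)
    (X Y : Ω → ℝ) (u : ℝ) : ℝ :=
  sInf {v : ℝ | ∃ α β : ℝ, v = condMean μ X u (fun ω => (Y ω - α - β * X ω) ^ 2)}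

section Aux
variable {Ω : Type*} [MeasurableSpace Ω]


/-- Key independence lemma: set-integral over a tail event of `X` of a product
`k(X)·φ(ε)` factorizes. -/
lemma indep_tail_integral (μ : Measure Ω) [IsProbabilityMeasure μ]
    {X ε : Ω → ℝ} (hX : Measurable X) (hindep : IndepFun X ε μ)
    {k φ : ℝ → ℝ} (hk : Measurable k) (hφ : Measurable φ)
    (hki : Integrable (fun ω => k (X ω)) μ) (hφi : Integrable (fun ω => φ (ε ω)) μ)
    (u : ℝ) :
    ∫ ω in {ω | u ≤ X ω}, k (X ω) * φ (ε ω) ∂μ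
      = (∫ ω in {ω | u ≤ X ω}, k (X ω) ∂μ) * ∫ ω, φ (ε ω) ∂μ := by
  set A : Set Ω := {ω | u ≤ X ω} with hAdef
  have hA : MeasurableSet A := hX measurableSet_Ici
  set f : ℝ → ℝ := Set.indicator (Set.Ici u) k with hfdef
  have hfm : Measurable f := hk.indicator measurableSet_Ici
  have hcomp : ∀ ω, f (X ω) = Set.indicator A (fun ω => k (X ω)) ω := by
    intro ω
    by_cases h : u ≤ X ω <;>
      simp [hfdef, Set.indicator_apply, hAdef, h, Set.mem_Ici]
  have h1 : (fun ω => f (X ω)) = Set.indicator A (fun ω => k (X ω)) := funext hcomp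
  have hint_f : Integrable (fun ω => f (X ω)) μ := by
    rw [h1]; exact hki.indicator hA
  have hIndep : IndepFun (fun ω => f (X ω)) (fun ω => φ (ε ω)) μ :=
    hindep.comp hfm hφ
  have key := hIndep.integral_fun_mul_eq_mul_integral hint_f.aestronglyMeasurable hφi.aestronglyMeasurable
  have h2 : ∫ ω in A, k (X ω) * φ (ε ω) ∂μ = ∫ ω, f (X ω) * φ (ε ω) ∂μ := by
    rw [← integral_indicator hA]
    congr 1
    funext ω
    by_cases h : ω ∈ A
    · rw [Set.indicator_of_mem h, hcomp ω, Set.indicator_of_mem h]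
    · rw [Set.indicator_of_notMem h, hcomp ω, Set.indicator_of_notMem h, zero_mul]
  have h3 : ∫ ω in A, k (X ω) ∂μ = ∫ ω, f (X ω) ∂μ := by
    rw [← integral_indicator hA, ← h1]
  rw [h2, h3]
  exact key


/-- From conditional probability one, get nullity of the complement inside the event. -/
lemma null_of_cond_one (μ : Measure Ω) [IsProbabilityMeasure μ]
    {B T : Set Ω} (hB : MeasurableSet B) (hT : MeasurableSet T)
    (hB0 : μ B ≠ 0) (h : μ[|B] T = 1) : μ (Tᶜ ∩ B) = 0 := by
  rw [cond_apply hB] at h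
  have hBfin : μ B ≠ ⊤ := measure_ne_top μ B
  have h1 : μ (B ∩ T) = μ B := by
    have := congrArg (fun x => μ B * x) h
    simp only [mul_one] at this
    rw [← mul_assoc, ENNReal.mul_inv_cancel hB0 hBfin, one_mul] at this
    exact this
  have h2 := measure_inter_add_diff B hT (μ := μ)
  rw [h1] at h2
  have h3 : μ (B \ T) = 0 := by
    nth_rewrite 2 [← add_zero (μ B)] at h2
    exact (ENNReal.add_right_inj hBfin).mp h2
  rw [Set.inter_comm, ← Set.diff_eq]
  exact h3

/-- Conversely, nullity of the complement inside the event gives conditional probability one. -/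
lemma cond_one_of_null (μ : Measure Ω) [IsProbabilityMeasure μ]
    {B T : Set Ω} (hB : MeasurableSet B) (hT : MeasurableSet T)
    (hB0 : μ B ≠ 0) (h : μ (Tᶜ ∩ B) = 0) : μ[|B] T = 1 := by
  rw [cond_apply hB]
  have h2 := measure_inter_add_diff B hT (μ := μ)
  have h3 : μ (B \ T) = 0 := by
    rw [Set.diff_eq, Set.inter_comm]; exact h
  rw [h3, add_zero] at h2
  rw [h2, ENNReal.inv_mul_cancel hB0 (measure_ne_top μ B)]

lemma bddBelow_U (μ : Measure Ω) [IsProbabilityMeasure μ]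
    (X : Ω → ℝ) (r : ℝ → ℝ) (hX : Measurable X) (hr : Measurable r)
    (hcdf : ∀ x : ℝ, μ {ω | X ω = x} = 0)
    (U : Set ℝ)
    (hU : U = {u : ℝ | 0 < μ {ω | u < X ω} ∧
        ∃ α β : ℝ, μ[|{ω | u < X ω}] {ω | r (X ω) = α + β * X ω} = 1})
    (hUne : U.Nonempty)
    (hnotlin : ∀ α β : ℝ, μ {ω | r (X ω) = α + β * X ω} < 1) :
    BddBelow U := by
  by_contra hbd
  obtain ⟨a, haU⟩ := hUne
  have ha := hU ▸ haU
  obtain ⟨haB, α, β, hacond⟩ := ha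
  have hmeasB : ∀ v : ℝ, MeasurableSet {ω | v < X ω} := fun v => hX measurableSet_Ioi
  have hSmeas : ∀ α' β' : ℝ, MeasurableSet {ω | r (X ω) = α' + β' * X ω} := fun α' β' =>
    measurableSet_eq_fun (hr.comp hX) (measurable_const.add (measurable_const.mul hX))
  have hSa : μ ({ω | r (X ω) = α + β * X ω}ᶜ ∩ {ω | a < X ω}) = 0 :=
    null_of_cond_one μ (hmeasB a) (hSmeas α β) (ne_of_gt haB) hacond
  -- all thresholds in U share the same coefficients
  have key : ∀ u' ∈ U, μ ({ω | r (X ω) = α + β * X ω}ᶜ ∩ {ω | u' < X ω}) = 0 := by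
    intro u' hu'
    obtain ⟨hB', α', β', hcond'⟩ := hU ▸ hu'
    rcases le_or_gt a u' with h | h
    · exact measure_mono_null (Set.inter_subset_inter_right _
        (fun ω (hω : u' < X ω) => lt_of_le_of_lt h hω)) hSa
    · have hS'null : μ ({ω | r (X ω) = α' + β' * X ω}ᶜ ∩ {ω | u' < X ω}) = 0 :=
        null_of_cond_one μ (hmeasB u') (hSmeas α' β') (ne_of_gt hB') hcond'
      have hS'a : μ ({ω | r (X ω) = α' + β' * X ω}ᶜ ∩ {ω | a < X ω}) = 0 :=
        measure_mono_null (Set.inter_subset_inter_right _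
          (fun ω (hω : a < X ω) => lt_trans h hω)) hS'null
      -- the "good" set has positive measure
      have hDpos :
          0 < μ ({ω | a < X ω} ∩ {ω | r (X ω) = α + β * X ω} ∩ {ω | r (X ω) = α' + β' * X ω}) := by
        by_contra hD
        push_neg at hD
        have hD0 :
            μ ({ω | a < X ω} ∩ {ω | r (X ω) = α + β * X ω} ∩ {ω | r (X ω) = α' + β' * X ω}) = 0 :=
          le_antisymm hD zero_le
        have hcover : {ω | a < X ω} ⊆
            ({ω | a < X ω} ∩ {ω | r (X ω) = α + β * X ω} ∩ {ω | r (X ω) = α' + β' * X ω}) ∪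
              (({ω | r (X ω) = α + β * X ω}ᶜ ∩ {ω | a < X ω}) ∪
                ({ω | r (X ω) = α' + β' * X ω}ᶜ ∩ {ω | a < X ω})) := by
          intro ω hω
          by_cases h1 : ω ∈ {ω | r (X ω) = α + β * X ω}
          · by_cases h2 : ω ∈ {ω | r (X ω) = α' + β' * X ω}
            · exact Or.inl ⟨⟨hω, h1⟩, h2⟩
            · exact Or.inr (Or.inr ⟨h2, hω⟩)
          · exact Or.inr (Or.inl ⟨h1, hω⟩)
        have hle2 := (measure_mono hcover).trans ((measure_union_le _ _).trans
          (add_le_add_right (measure_union_le (μ := μ) _ _) _))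
        rw [hD0, hSa, hS'a] at hle2
        simp at hle2
        exact absurd hle2 (ne_of_gt haB)
      -- coefficients are equal
      have hββ' : β' = β := by
        by_contra hne
        have hβne : β - β' ≠ 0 := sub_ne_zero.mpr (fun hh => hne hh.symm)
        have hsub : ({ω | a < X ω} ∩ {ω | r (X ω) = α + β * X ω} ∩
            {ω | r (X ω) = α' + β' * X ω}) ⊆ {ω | X ω = (α' - α) / (β - β')} := by
          rintro ω ⟨⟨_, h1⟩, h2⟩
          have e1 : r (X ω) = α + β * X ω := h1
          have e2 : r (X ω) = α' + β' * X ω := h2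
          show X ω = (α' - α) / (β - β')
          rw [eq_div_iff hβne]
          linarith
        exact absurd (measure_mono_null hsub (hcdf _)) (ne_of_gt hDpos)
      subst hββ'
      have hαα' : α' = α := by
        by_contra hne
        have hsub : ({ω | a < X ω} ∩ {ω | r (X ω) = α + β' * X ω} ∩
            {ω | r (X ω) = α' + β' * X ω}) ⊆ (∅ : Set Ω) := by
          rintro ω ⟨⟨_, h1⟩, h2⟩
          have e1 : r (X ω) = α + β' * X ω := h1
          have e2 : r (X ω) = α' + β' * X ω := h2
          exact absurd (by linarith : α' = α) hne
        have := measure_mono_null (μ := μ) hsub measure_empty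
        exact absurd this (ne_of_gt hDpos)
      subst hαα'
      exact hS'null
  -- unboundedness gives μ Sᶜ = 0
  have hbound : ∀ n : ℕ, μ {ω | r (X ω) = α + β * X ω}ᶜ ≤ μ {ω | X ω ≤ -(n : ℝ)} := by
    intro n
    obtain ⟨u', hu'U, hu'lt⟩ : ∃ u' ∈ U, u' < -(n : ℝ) := by
      by_contra hcon
      push_neg at hcon
      exact hbd ⟨-(n : ℝ), fun x hx => hcon x hx⟩
    have hsub : {ω | r (X ω) = α + β * X ω}ᶜ ⊆
        ({ω | r (X ω) = α + β * X ω}ᶜ ∩ {ω | u' < X ω}) ∪ {ω | X ω ≤ -(n : ℝ)} := by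
      intro ω hω
      by_cases h : u' < X ω
      · exact Or.inl ⟨hω, h⟩
      · exact Or.inr (le_of_lt (lt_of_le_of_lt (not_lt.mp h) hu'lt))
    calc μ {ω | r (X ω) = α + β * X ω}ᶜ
        ≤ μ (({ω | r (X ω) = α + β * X ω}ᶜ ∩ {ω | u' < X ω}) ∪ {ω | X ω ≤ -(n : ℝ)}) :=
          measure_mono hsub
      _ ≤ μ ({ω | r (X ω) = α + β * X ω}ᶜ ∩ {ω | u' < X ω}) + μ {ω | X ω ≤ -(n : ℝ)} :=
          measure_union_le _ _
      _ = μ {ω | X ω ≤ -(n : ℝ)} := by rw [key u' hu'U, zero_add]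
  have hzero : μ {ω | r (X ω) = α + β * X ω}ᶜ = 0 := by
    have hle : μ {ω | r (X ω) = α + β * X ω}ᶜ ≤ ⨅ n : ℕ, μ {ω | X ω ≤ -(n : ℝ)} :=
      le_iInf hbound
    have hinter : (⋂ n : ℕ, {ω | X ω ≤ -(n : ℝ)}) = ∅ := by
      ext ω
      simp only [Set.mem_iInter, Set.mem_empty_iff_false, iff_false]
      intro h
      obtain ⟨n, hn⟩ := exists_nat_gt (-(X ω))
      have hn2 := h n
      simp only [Set.mem_setOf_eq] at hn2
      linarith
    have hdir : Directed (· ⊇ ·) (fun n : ℕ => {ω | X ω ≤ -(n : ℝ)}) := by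
      intro m n
      refine ⟨max m n, fun ω (h : X ω ≤ -((max m n : ℕ) : ℝ)) => ?_,
        fun ω (h : X ω ≤ -((max m n : ℕ) : ℝ)) => ?_⟩
      · exact le_trans h (neg_le_neg (Nat.cast_le.mpr (le_max_left _ _)))
      · exact le_trans h (neg_le_neg (Nat.cast_le.mpr (le_max_right _ _)))
    have hiInf := Directed.measure_iInter (μ := μ) (s := fun n : ℕ => {ω | X ω ≤ -(n : ℝ)})
      (fun n : ℕ => (hX measurableSet_Iic).nullMeasurableSet) hdir ⟨0, measure_ne_top μ _⟩
    rw [hinter] at hiInf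
    simp only [measure_empty] at hiInf
    exact le_antisymm (hiInf ▸ hle) zero_le
  have : μ {ω | r (X ω) = α + β * X ω} = 1 :=
    (prob_compl_eq_zero_iff (hSmeas α β)).mp hzero
  exact absurd this (ne_of_lt (hnotlin α β))


lemma integrable_of_sq (μ : Measure Ω) [IsProbabilityMeasure μ] {f : Ω → ℝ}
    (hm : AEStronglyMeasurable f μ) (h2 : Integrable (fun ω => f ω ^ 2) μ) :
    Integrable f μ := by
  refine Integrable.mono' (h2.add (integrable_const 1)) hm ?_
  filter_upwards with ω
  rw [Real.norm_eq_abs]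
  show |f ω| ≤ f ω ^ 2 + 1
  nlinarith [sq_nonneg (|f ω| - 1), sq_abs (f ω), abs_nonneg (f ω)]

lemma integrable_mul_of_sq (μ : Measure Ω) [IsProbabilityMeasure μ] {f g : Ω → ℝ}
    (hm : AEStronglyMeasurable (fun ω => f ω * g ω) μ)
    (hf2 : Integrable (fun ω => f ω ^ 2) μ) (hg2 : Integrable (fun ω => g ω ^ 2) μ) :
    Integrable (fun ω => f ω * g ω) μ := by
  refine Integrable.mono' (hf2.add hg2) hm ?_
  filter_upwards with ω
  rw [Real.norm_eq_abs, abs_mul]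
  show |f ω| * |g ω| ≤ f ω ^ 2 + g ω ^ 2
  nlinarith [sq_nonneg (|f ω| - |g ω|), sq_abs (f ω), sq_abs (g ω), abs_nonneg (f ω),
    abs_nonneg (g ω), mul_nonneg (abs_nonneg (f ω)) (abs_nonneg (g ω))]
end Aux

theorem stmt5 {Ω : Type*} [MeasurableSpace Ω] (μ : Measure Ω) [IsProbabilityMeasure μ]
    (X ε : Ω → ℝ) (r : ℝ → ℝ) (σ : ℝ)
    (hX : Measurable X) (hε : Measurable ε) (hr : Measurable r)
    (hindep : IndepFun X ε μ)
    (hε1 : Integrable ε μ) (hmean : ∫ ω, ε ω ∂μ = 0)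
    (hε2 : Integrable (fun ω => (ε ω) ^ 2) μ) (hσ : ∫ ω, (ε ω) ^ 2 ∂μ = σ ^ 2)
    (hX2 : Integrable (fun ω => (X ω) ^ 2) μ)
    (hr2 : Integrable (fun ω => (r (X ω)) ^ 2) μ)
    (hcdf : ∀ x : ℝ, μ {ω | X ω = x} = 0)
    (Y : Ω → ℝ) (hY : ∀ ω, Y ω = r (X ω) + ε ω)
    -- the set of admissible thresholds and its infimum u₀
    (U : Set ℝ)
    (hU : U = {u : ℝ | 0 < μ {ω | u < X ω} ∧
        ∃ α β : ℝ, μ[|{ω | u < X ω}] {ω | r (X ω) = α + β * X ω} = 1})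
    (hUne : U.Nonempty)
    (u₀ : ℝ) (hu₀ : u₀ = sInf U)
    -- r is not almost surely linear on the whole support
    (hnotlin : ∀ α β : ℝ, μ {ω | r (X ω) = α + β * X ω} < 1) :
    ∀ u : ℝ, u < u₀ → 0 < μ {ω | u ≤ X ω} →
      0 < condMean μ X u (fun ω => (X ω) ^ 2) - (condMean μ X u X) ^ 2 →
      σ ^ 2 < linLoss μ X Y u := by
  intro u hu hApos hvar
  simp only [condMean] at hvar
  have hgm : Measurable (fun ω => r (X ω)) := hr.comp hX
  set A : Set Ω := {ω | u ≤ X ω} with hAdef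
  have hA : MeasurableSet A := hX measurableSet_Ici
  have hAne : μ A ≠ 0 := ne_of_gt hApos
  have hAfin : μ A ≠ ⊤ := measure_ne_top μ A
  set p : ℝ := (μ A).toReal with hpdef
  have hp : 0 < p := ENNReal.toReal_pos hAne hAfin
  have hpne : p ≠ 0 := ne_of_gt hp
  -- integrability
  have intX : Integrable X μ := integrable_of_sq μ hX.aestronglyMeasurable hX2
  have intg : Integrable (fun ω => r (X ω)) μ :=
    integrable_of_sq μ hgm.aestronglyMeasurable hr2
  have intgX : Integrable (fun ω => r (X ω) * X ω) μ :=
    integrable_mul_of_sq μ (hgm.mul hX).aestronglyMeasurable hr2 hX2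
  have intq : ∀ α β : ℝ, Integrable (fun ω => (r (X ω) - α - β * X ω) ^ 2) μ := by
    intro α β
    have hmq : AEStronglyMeasurable (fun ω => (r (X ω) - α - β * X ω) ^ 2) μ :=
      (((hgm.sub measurable_const).sub (measurable_const.mul hX)).pow_const 2).aestronglyMeasurable
    refine Integrable.mono'
      ((hr2.const_mul 3).add ((integrable_const (3 * α ^ 2)).add (hX2.const_mul (3 * β ^ 2))))
      hmq ?_
    filter_upwards with ω
    rw [Real.norm_eq_abs, abs_of_nonneg (sq_nonneg _)]
    show (r (X ω) - α - β * X ω) ^ 2 ≤ 3 * r (X ω) ^ 2 + (3 * α ^ 2 + 3 * β ^ 2 * X ω ^ 2)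
    nlinarith [sq_nonneg (r (X ω) + α), sq_nonneg (r (X ω) + β * X ω), sq_nonneg (α - β * X ω)]
  have inth : ∀ α β : ℝ, Integrable (fun ω => r (X ω) - α - β * X ω) μ := fun α β =>
    (intg.sub (integrable_const α)).sub (intX.const_mul β)
  have inthX : ∀ α β : ℝ, Integrable (fun ω => (r (X ω) - α - β * X ω) * X ω) μ := by
    intro α β
    have h0 : Integrable (fun ω => r (X ω) * X ω - α * X ω - β * X ω ^ 2) μ :=
      (intgX.sub (intX.const_mul α)).sub (hX2.const_mul β)
    refine h0.congr (Filter.Eventually.of_forall fun ω => ?_)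
    ring
  -- moments
  set IX : ℝ := ∫ ω in A, X ω ∂μ with hIXdef
  set IX2 : ℝ := ∫ ω in A, X ω ^ 2 ∂μ with hIX2def
  set Ig : ℝ := ∫ ω in A, r (X ω) ∂μ with hIgdef
  set IgX : ℝ := ∫ ω in A, r (X ω) * X ω ∂μ with hIgXdef
  have hvar' : 0 < IX2 / p - (IX / p) ^ 2 := hvar
  have hVne : IX2 / p - (IX / p) ^ 2 ≠ 0 := ne_of_gt hvar'
  set βs : ℝ := (IgX / p - Ig / p * (IX / p)) / (IX2 / p - (IX / p) ^ 2) with hβsdef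
  set αs : ℝ := Ig / p - βs * (IX / p) with hαsdef
  -- basic set-integral identities
  have hconst : ∀ c : ℝ, ∫ _ω in A, c ∂μ = p * c := by
    intro c
    rw [setIntegral_const, smul_eq_mul]
    rfl
  have hsplit : ∀ α β : ℝ, ∫ ω in A, (r (X ω) - α - β * X ω) ∂μ = Ig - p * α - β * IX := by
    intro α β
    have i1 : Integrable (fun ω => r (X ω) - α) (μ.restrict A) :=
      intg.restrict.sub (integrable_const α)
    have i2 : Integrable (fun ω => β * X ω) (μ.restrict A) := (intX.const_mul β).restrict
    have i0 : Integrable (fun _ω : Ω => α) (μ.restrict A) := integrable_const α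
    rw [integral_sub i1 i2, integral_sub intg.restrict i0, integral_const_mul, hconst]
  have hsplitX : ∀ α β : ℝ,
      ∫ ω in A, (r (X ω) - α - β * X ω) * X ω ∂μ = IgX - α * IX - β * IX2 := by
    intro α β
    have hfe : (fun ω => (r (X ω) - α - β * X ω) * X ω)
        = fun ω => r (X ω) * X ω - α * X ω - β * X ω ^ 2 := funext fun ω => by ring
    have j1 : Integrable (fun ω => r (X ω) * X ω - α * X ω) (μ.restrict A) :=
      intgX.restrict.sub (intX.const_mul α).restrict
    have j2 : Integrable (fun ω => β * X ω ^ 2) (μ.restrict A) := (hX2.const_mul β).restrict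
    have j0 : Integrable (fun ω => α * X ω) (μ.restrict A) := (intX.const_mul α).restrict
    rw [hfe, integral_sub j1 j2, integral_sub intgX.restrict j0,
      integral_const_mul, integral_const_mul]
  have horth1 : ∫ ω in A, (r (X ω) - αs - βs * X ω) ∂μ = 0 := by
    rw [hsplit, hαsdef]
    field_simp <;> ring
  have horth2 : ∫ ω in A, (r (X ω) - αs - βs * X ω) * X ω ∂μ = 0 := by
    have hb : βs * (IX2 / p - (IX / p) ^ 2) = IgX / p - Ig / p * (IX / p) := by
      rw [hβsdef]; exact div_mul_cancel₀ _ hVne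
    have hb2 : βs * (IX2 * p - IX ^ 2) = IgX * p - Ig * IX := by
      calc βs * (IX2 * p - IX ^ 2) = βs * (IX2 / p - (IX / p) ^ 2) * p ^ 2 := by
            field_simp <;> ring
        _ = (IgX / p - Ig / p * (IX / p)) * p ^ 2 := by rw [hb]
        _ = IgX * p - Ig * IX := by field_simp <;> ring
    rw [hsplitX, hαsdef]
    field_simp
    linear_combination (-1 : ℝ) * hb2
  set C : ℝ := ∫ ω in A, (r (X ω) - αs - βs * X ω) ^ 2 ∂μ with hCdef
  have hCnn : 0 ≤ C := setIntegral_nonneg hA fun ω _ => sq_nonneg _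
  -- lower bound for any coefficients
  have hlow : ∀ α β : ℝ, C ≤ ∫ ω in A, (r (X ω) - α - β * X ω) ^ 2 ∂μ := by
    intro α β
    have hpt : (fun ω => (r (X ω) - α - β * X ω) ^ 2)
        = fun ω => (r (X ω) - αs - βs * X ω) ^ 2 +
            (2 * (αs - α) * (r (X ω) - αs - βs * X ω) +
              (2 * (βs - β) * ((r (X ω) - αs - βs * X ω) * X ω) +
                ((αs - α) + (βs - β) * X ω) ^ 2)) := funext fun ω => by ring
    have i4 : Integrable (fun ω => ((αs - α) + (βs - β) * X ω) ^ 2) μ := by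
      have h0 : Integrable (fun ω => (αs - α) ^ 2 +
          (2 * (αs - α) * (βs - β) * X ω + (βs - β) ^ 2 * X ω ^ 2)) μ :=
        (integrable_const ((αs - α) ^ 2)).add
          ((intX.const_mul (2 * (αs - α) * (βs - β))).add (hX2.const_mul ((βs - β) ^ 2)))
      refine h0.congr (Filter.Eventually.of_forall fun ω => ?_)
      ring
    have k1 : Integrable (fun ω => (r (X ω) - αs - βs * X ω) ^ 2) (μ.restrict A) :=
      (intq αs βs).restrict
    have k2 : Integrable (fun ω => 2 * (αs - α) * (r (X ω) - αs - βs * X ω)) (μ.restrict A) :=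
      ((inth αs βs).const_mul _).restrict
    have k3 : Integrable
        (fun ω => 2 * (βs - β) * ((r (X ω) - αs - βs * X ω) * X ω)) (μ.restrict A) :=
      ((inthX αs βs).const_mul _).restrict
    have k4 : Integrable (fun ω => ((αs - α) + (βs - β) * X ω) ^ 2) (μ.restrict A) := i4.restrict
    have k34 : Integrable (fun ω => 2 * (βs - β) * ((r (X ω) - αs - βs * X ω) * X ω) +
        ((αs - α) + (βs - β) * X ω) ^ 2) (μ.restrict A) := k3.add k4
    have k234 : Integrable (fun ω => 2 * (αs - α) * (r (X ω) - αs - βs * X ω) +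
        (2 * (βs - β) * ((r (X ω) - αs - βs * X ω) * X ω) +
          ((αs - α) + (βs - β) * X ω) ^ 2)) (μ.restrict A) := k2.add k34
    rw [hpt, integral_add k1 k234, integral_add k2 k34, integral_add k3 k4,
      integral_const_mul, integral_const_mul, horth1, horth2, mul_zero, mul_zero, zero_add,
      zero_add]
    exact le_add_of_nonneg_right (setIntegral_nonneg hA fun ω _ => sq_nonneg _)
  -- C is positive
  have hCne : C ≠ 0 := by
    intro hC0
    have hint0 : ∫ ω in A, (r (X ω) - αs - βs * X ω) ^ 2 ∂μ = 0 := by rw [← hCdef]; exact hC0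
    have hae0 := (integral_eq_zero_iff_of_nonneg (fun ω => sq_nonneg _)
      (intq αs βs).restrict).mp hint0
    have hae : ∀ᵐ ω ∂μ.restrict A, r (X ω) = αs + βs * X ω := by
      filter_upwards [hae0] with ω hω
      have h2 : (r (X ω) - αs - βs * X ω) ^ 2 = 0 := hω
      have h3 := sq_eq_zero_iff.mp h2
      linarith
    rw [ae_restrict_iff' hA] at hae
    have hnull : μ ({ω | r (X ω) = αs + βs * X ω}ᶜ ∩ A) = 0 := by
      rw [Filter.eventually_iff, mem_ae_iff] at hae
      refine measure_mono_null ?_ hae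
      rintro ω ⟨h1, h2⟩
      exact fun himp => h1 (himp h2)
    have hBsub : {ω | u < X ω} ⊆ A := fun ω (h : u < X ω) => (le_of_lt h : u ≤ X ω)
    have hBpos : 0 < μ {ω | u < X ω} := by
      by_contra hc
      push_neg at hc
      have hB0 : μ {ω | u < X ω} = 0 := le_antisymm hc zero_le
      have hle : μ A ≤ μ {ω | u < X ω} + μ {ω | X ω = u} := by
        refine le_trans (measure_mono ?_) (measure_union_le _ _)
        intro ω (hω : u ≤ X ω)
        rcases lt_or_eq_of_le hω with h | h
        · exact Or.inl h
        · exact Or.inr h.symm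
      rw [hB0, hcdf u, add_zero] at hle
      exact absurd (le_antisymm hle zero_le) hAne
    have hTmeas : MeasurableSet {ω | r (X ω) = αs + βs * X ω} :=
      measurableSet_eq_fun (hr.comp hX) (measurable_const.add (measurable_const.mul hX))
    have hTB : μ ({ω | r (X ω) = αs + βs * X ω}ᶜ ∩ {ω | u < X ω}) = 0 :=
      measure_mono_null (Set.inter_subset_inter_right _ hBsub) hnull
    have hcond1 : μ[|{ω | u < X ω}] {ω | r (X ω) = αs + βs * X ω} = 1 :=
      cond_one_of_null μ (hX measurableSet_Ioi) hTmeas (ne_of_gt hBpos) hTB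
    have huU : u ∈ U := by rw [hU]; exact ⟨hBpos, αs, βs, hcond1⟩
    have hbdd := bddBelow_U μ X r hX hr hcdf U hU hUne hnotlin
    have hle : u₀ ≤ u := by rw [hu₀]; exact csInf_le hbdd huU
    linarith
  have hCpos : 0 < C := lt_of_le_of_ne hCnn (Ne.symm hCne)
  -- cross terms vanish / error variance
  have hcross : ∀ α β : ℝ, ∫ ω in A, (r (X ω) - α - β * X ω) * ε ω ∂μ = 0 := by
    intro α β
    have hk : Measurable (fun x : ℝ => r x - α - β * x) :=
      (hr.sub measurable_const).sub (measurable_const.mul measurable_id)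
    have hthis := indep_tail_integral μ hX hindep (k := fun x => r x - α - β * x)
      (φ := fun x => x) hk measurable_id (inth α β) hε1 u
    rw [← hAdef] at hthis
    rw [hthis, hmean, mul_zero]
  have hε2A : ∫ ω in A, ε ω ^ 2 ∂μ = p * σ ^ 2 := by
    have hthis := indep_tail_integral μ hX hindep (k := fun _ => 1)
      (φ := fun x => x ^ 2) measurable_const (measurable_id.pow_const 2)
      (integrable_const 1) hε2 u
    rw [← hAdef] at hthis
    simp only [one_mul] at hthis
    rw [hthis, hσ, hconst, mul_one]
  have intcross : ∀ α β : ℝ, Integrable (fun ω => (r (X ω) - α - β * X ω) * ε ω) μ := by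
    intro α β
    have hk : Measurable (fun x : ℝ => r x - α - β * x) :=
      (hr.sub measurable_const).sub (measurable_const.mul measurable_id)
    have hi : IndepFun (fun ω => r (X ω) - α - β * X ω) ε μ := hindep.comp hk measurable_id
    exact hi.integrable_mul (inth α β) hε1
  -- the key formula for condMean
  have hform : ∀ α β : ℝ, condMean μ X u (fun ω => (Y ω - α - β * X ω) ^ 2)
      = (∫ ω in A, (r (X ω) - α - β * X ω) ^ 2 ∂μ) / p + σ ^ 2 := by
    intro α β
    have hpt : (fun ω => (Y ω - α - β * X ω) ^ 2)
        = fun ω => (r (X ω) - α - β * X ω) ^ 2 +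
            (2 * ((r (X ω) - α - β * X ω) * ε ω) + ε ω ^ 2) := funext fun ω => by
      rw [hY ω]; ring
    have hint : ∫ ω in A, (Y ω - α - β * X ω) ^ 2 ∂μ
        = (∫ ω in A, (r (X ω) - α - β * X ω) ^ 2 ∂μ) + p * σ ^ 2 := by
      have m1 : Integrable (fun ω => (r (X ω) - α - β * X ω) ^ 2) (μ.restrict A) :=
        (intq α β).restrict
      have m2 : Integrable (fun ω => 2 * ((r (X ω) - α - β * X ω) * ε ω)) (μ.restrict A) :=
        ((intcross α β).const_mul 2).restrict
      have m3 : Integrable (fun ω => ε ω ^ 2) (μ.restrict A) := hε2.restrict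
      have m23 : Integrable (fun ω => 2 * ((r (X ω) - α - β * X ω) * ε ω) + ε ω ^ 2)
          (μ.restrict A) := m2.add m3
      rw [hpt, integral_add m1 m23, integral_add m2 m3,
        integral_const_mul, hcross, mul_zero, zero_add, hε2A]
    simp only [condMean]
    rw [← hAdef, ← hpdef, hint, add_div, mul_div_cancel_left₀ _ hpne]
  -- conclusion
  have hlb : ∀ v ∈ {v : ℝ | ∃ α β : ℝ,
      v = condMean μ X u (fun ω => (Y ω - α - β * X ω) ^ 2)}, σ ^ 2 + C / p ≤ v := by
    rintro v ⟨α, β, rfl⟩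
    rw [hform α β]
    have hdiv : C / p ≤ (∫ ω in A, (r (X ω) - α - β * X ω) ^ 2 ∂μ) / p :=
      div_le_div_of_nonneg_right (hlow α β) hp.le
    linarith
  have hsinf : σ ^ 2 + C / p ≤ linLoss μ X Y u :=
    le_csInf ⟨_, 0, 0, rfl⟩ hlb
  have : 0 < C / p := div_pos hCpos hp
  linarith
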